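/- Let B = F_2[x,y]/(y² + y + x⁵ + x³ + 1). For every integer n ≥ 1, writing X = x^{2^{n−1}} and Y = y^{2^{n−1}} in B, one has X^{22} + (1+x)(X^{20}+X^{18}+X^{16}) + (x²+x+1)(X^{12}+X^{10}) + X⁹ + xX⁸ + X⁵ + (Y+y)(X⁴+X²) + x² + x = (y+Y⁴)(X⁴+X²) + X^{22} + (x+1)(X^{20}+X^{18}) + (x+1)X^{16} + X^{14} + (x²+x)(X^{12}+X^{10}) + (x+1)X⁸ + x² + x in B. (This is the equality of numerators over the common denominator X^{24} + xX^{16} + (x+1)X⁸ + x² + x proving case (iv) of the Lara Rodríguez–Thakur conjecture: the conjectured formula for the ratio α_{n,1} = ζ_A(q^n−1, q^{n+1}−q^n)/ζ_A(q^{n+1}−1) agrees with the shtuka-theoretic formula; it reduces to the identity Y⁴ + Y = X^{10} + X⁶ + X⁵ + X³ in B.) -/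

import Mathlib

/-!
`B = F₂[x,y]/(y² + y + x⁵ + x³ + 1)`, realised as the quotient of the bivariate
polynomial ring `Polynomial (Polynomial (ZMod 2))` (inner variable `x`, outer
variable `y`) by the ideal generated by the defining relation.
-/

open Polynomial

/-- The coordinate ring `B = F₂[x,y]/(y² + y + x⁵ + x³ + 1)`. -/
abbrev Bfour : Type :=
  Polynomial (Polynomial (ZMod 2)) ⧸
    Ideal.span {(Polynomial.X ^ 2 + Polynomial.X +
      Polynomial.C (Polynomial.X ^ 5 + Polynomial.X ^ 3 + 1) :
        Polynomial (Polynomial (ZMod 2)))}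

/-- The image `x` of the inner variable in `B`. -/
noncomputable def xB : Bfour :=
  Ideal.Quotient.mk _ (Polynomial.C Polynomial.X)

/-- The image `y` of the outer variable in `B`. -/
noncomputable def yB : Bfour :=
  Ideal.Quotient.mk _ Polynomial.X

section Aux
variable {R : Type*} [CommRing R]

lemma st19_step (X Y : R) (htwo : (2 : R) = 0) (h : Y ^ 2 + Y = X ^ 5 + X ^ 3 + 1) :
    (Y ^ 2) ^ 2 + Y ^ 2 = (X ^ 2) ^ 5 + (X ^ 2) ^ 3 + 1 := by
  linear_combination (Y ^ 2 + Y + X ^ 5 + X ^ 3 + 1) * h +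
    (-Y ^ 3 + X ^ 8 + X ^ 5 + X ^ 3) * htwo

lemma st19_main (x y X Y : R) (htwo : (2 : R) = 0)
    (h : Y ^ 2 + Y = X ^ 5 + X ^ 3 + 1) :
    X ^ 22 + (1 + x) * (X ^ 20 + X ^ 18 + X ^ 16) +
          (x ^ 2 + x + 1) * (X ^ 12 + X ^ 10) + X ^ 9 + x * X ^ 8 + X ^ 5 +
          (Y + y) * (X ^ 4 + X ^ 2) + x ^ 2 + x =
      (y + Y ^ 4) * (X ^ 4 + X ^ 2) + X ^ 22 + (x + 1) * (X ^ 20 + X ^ 18) +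
        (x + 1) * X ^ 16 + X ^ 14 + (x ^ 2 + x) * (X ^ 12 + X ^ 10) +
        (x + 1) * X ^ 8 + x ^ 2 + x := by
  have h4 : Y ^ 4 + Y = X ^ 10 + X ^ 6 + X ^ 5 + X ^ 3 := by
    linear_combination (Y ^ 2 + Y + X ^ 5 + X ^ 3 + 1 + 1) * h +
      (X ^ 8 + X ^ 5 + X ^ 3 - Y ^ 3 - Y ^ 2 + 1) * htwo
  linear_combination (-(X ^ 4 + X ^ 2)) * h4 +
    (X ^ 2 * Y + X ^ 4 * Y - X ^ 7 - X ^ 8 - X ^ 14) * htwo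

end Aux

/-- for every `n ≥ 1`, with `X = x^{2^{n-1}}` and `Y = y^{2^{n-1}}`
in `B`,
`X²² + (1+x)(X²⁰+X¹⁸+X¹⁶) + (x²+x+1)(X¹²+X¹⁰) + X⁹ + xX⁸ + X⁵ + (Y+y)(X⁴+X²) + x² + x
 = (y+Y⁴)(X⁴+X²) + X²² + (x+1)(X²⁰+X¹⁸) + (x+1)X¹⁶ + X¹⁴ + (x²+x)(X¹²+X¹⁰) + (x+1)X⁸ + x² + x`. -/


theorem statement19 (n : ℕ) (hn : 1 ≤ n) :
    ∀ X Y : Bfour, X = xB ^ 2 ^ (n - 1) → Y = yB ^ 2 ^ (n - 1) →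
      X ^ 22 + (1 + xB) * (X ^ 20 + X ^ 18 + X ^ 16) +
            (xB ^ 2 + xB + 1) * (X ^ 12 + X ^ 10) + X ^ 9 + xB * X ^ 8 + X ^ 5 +
            (Y + yB) * (X ^ 4 + X ^ 2) + xB ^ 2 + xB =
        (yB + Y ^ 4) * (X ^ 4 + X ^ 2) + X ^ 22 + (xB + 1) * (X ^ 20 + X ^ 18) +
          (xB + 1) * X ^ 16 + X ^ 14 + (xB ^ 2 + xB) * (X ^ 12 + X ^ 10) +
          (xB + 1) * X ^ 8 + xB ^ 2 + xB := by
  have hp : (2 : Polynomial (Polynomial (ZMod 2))) = 0 := by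
    have h0 : ((2 : ZMod 2)) = 0 := rfl
    rw [← map_ofNat (Polynomial.C : Polynomial (ZMod 2) →+* _) 2,
        ← map_ofNat (Polynomial.C : ZMod 2 →+* _) 2, h0]
    simp
  have htwo : (2 : Bfour) = 0 := by
    rw [← map_ofNat (Ideal.Quotient.mk (Ideal.span {(Polynomial.X ^ 2 + Polynomial.X +
      Polynomial.C (Polynomial.X ^ 5 + Polynomial.X ^ 3 + 1) :
        Polynomial (Polynomial (ZMod 2)))})) 2, hp, map_zero]
  have hrel : yB ^ 2 + yB = xB ^ 5 + xB ^ 3 + 1 := by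
    have h0 : (Ideal.Quotient.mk (Ideal.span {(Polynomial.X ^ 2 + Polynomial.X +
        Polynomial.C (Polynomial.X ^ 5 + Polynomial.X ^ 3 + 1) :
          Polynomial (Polynomial (ZMod 2)))}))
        (Polynomial.X ^ 2 + Polynomial.X +
          Polynomial.C (Polynomial.X ^ 5 + Polynomial.X ^ 3 + 1)) = 0 :=
      Ideal.Quotient.eq_zero_iff_mem.2 (Ideal.subset_span rfl)
    have h1 : yB ^ 2 + yB + (xB ^ 5 + xB ^ 3 + 1) = 0 := by
      simpa [xB, yB, map_add, map_pow, map_one, Polynomial.C_add, Polynomial.C_pow,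
        Polynomial.C_1] using h0
    linear_combination h1 - (xB ^ 5 + xB ^ 3 + 1) * htwo
  have key : ∀ k : ℕ,
      (yB ^ 2 ^ k) ^ 2 + yB ^ 2 ^ k = (xB ^ 2 ^ k) ^ 5 + (xB ^ 2 ^ k) ^ 3 + 1 := by
    intro k
    induction k with
    | zero => simpa using hrel
    | succ k ih =>
      have e1 : yB ^ 2 ^ (k + 1) = (yB ^ 2 ^ k) ^ 2 := by
        rw [← pow_mul, ← pow_succ]
      have e2 : xB ^ 2 ^ (k + 1) = (xB ^ 2 ^ k) ^ 2 := by
        rw [← pow_mul, ← pow_succ]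
      rw [e1, e2]
      exact st19_step (R := Bfour) _ _ htwo ih
  intro X Y hX hY
  subst hX; subst hY
  exact st19_main (R := Bfour) _ _ _ _ htwo (key (n - 1))
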